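/- arXiv:1907.02296 — 2 statements merged into one kernel-verified Lean document; each statement's English description precedes it below -/
import Mathlib

section
/- Every local run can be reordered into a 'soon' run: if (q_0,v_0) =u=> (q_n,v_n) is a local run, then there exists w ~ u such that (q_0,v_0) =w=> (q_n,v_n) is a local run in which the execution times of successive actions are nondecreasing. -/
open Classical

/-- Comparison operators appearing in guards `x ~ c`. -/
inductive Cmp | lt | le | eq | ge | gt

def Cmp.sat : Cmp → ℝ → ℤ → Prop
  | .lt, r, c => r < (c : ℝ)
  | .le, r, c => r ≤ (c : ℝ)
  | .eq, r, c => r = (c : ℝ)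
  | .ge, r, c => (c : ℝ) ≤ r
  | .gt, r, c => (c : ℝ) < r

/-- A guard: a finite conjunction of constraints `x ~ c` on clocks. -/
abbrev Guard (Clock : Type) := List (Clock × Cmp × ℤ)

/-- A difference constraint `y₁ - y₂ ◁ c` over variables `V`;
the boolean is `true` for strict `<` and `false` for `≤`. -/
abbrev DiffConstraint (V : Type) := V × V × Bool × ℤ

/-- Satisfaction of a difference constraint. -/
def csat {V : Type} (v : V → ℝ) (c : DiffConstraint V) : Prop :=
  if c.2.2.1 then v c.1 - v c.2.1 < (c.2.2.2 : ℝ) else v c.1 - v c.2.1 ≤ (c.2.2.2 : ℝ)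

/-- A network of timed automata: `k` processes, each owning its clocks and
locations; each action `b` has a domain `dom b` of synchronizing processes, and
for each process in the domain a set of `b`-transitions (location, guard, reset
set, target location), whose guards and resets only mention own clocks. -/
structure Network where
  k : ℕ
  kpos : 0 < k
  Clock : Type
  [clockFin : Fintype Clock]
  owner : Clock → Fin k
  Act : Type
  dom : Act → Finset (Fin k)
  Loc : Fin k → Type
  init : ∀ p, Loc p
  Trans : ∀ (_ : Act) (p : Fin k), Set (Loc p × Guard Clock × Set Clock × Loc p)
  trans_wf : ∀ b p tr, tr ∈ Trans b p →
    (∀ c ∈ tr.2.1, owner c.1 = p) ∧ (∀ x ∈ tr.2.2.1, owner x = p)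

attribute [instance] Network.clockFin

namespace Network

variable (N : Network)

/-- Global (discrete) states of the network. -/
abbrev State := ∀ p, N.Loc p

/-- Variables of local valuations: offset variables `x̃` and reference clocks `t_p`. -/
abbrev LVar := N.Clock ⊕ Fin N.k

/-- Variables of global valuations: offset variables `x̃` and the global reference clock `t`. -/
abbrev GVar := N.Clock ⊕ Unit

abbrev LVal := N.LVar → ℝ

abbrev GVal := N.GVar → ℝ

/-- A local valuation: nonnegative, and each offset is below the owner's reference clock. -/
def IsLVal (v : N.LVal) : Prop :=
  (∀ y, 0 ≤ v y) ∧ ∀ x : N.Clock, v (.inl x) ≤ v (.inr (N.owner x))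

/-- A global valuation: nonnegative, and each offset is below the global time `t`. -/
def IsGVal (v : N.GVal) : Prop :=
  (∀ y, 0 ≤ v y) ∧ ∀ x : N.Clock, v (.inl x) ≤ v (.inr ())

/-- Satisfaction of a guard by a local valuation: the value of clock `x` is
`v t_p - v x̃` where `p` owns `x`. -/
def lgsat (v : N.LVal) (g : Guard N.Clock) : Prop :=
  ∀ c ∈ g, Cmp.sat c.2.1 (v (.inr (N.owner c.1)) - v (.inl c.1)) c.2.2

/-- Satisfaction of a guard by a global valuation: the value of clock `x` is `v t - v x̃`. -/
def ggsat (v : N.GVal) (g : Guard N.Clock) : Prop :=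
  ∀ c ∈ g, Cmp.sat c.2.1 (v (.inr ()) - v (.inl c.1)) c.2.2

/-- Global delay: only the global reference clock advances. -/
def gdelay (v : N.GVal) (δ : ℝ) : N.GVal :=
  fun y => match y with
    | .inl x => v (.inl x)
    | .inr _ => v (.inr ()) + δ

/-- `v'` is obtained from `v` by a (finite) sequence of local delays; equivalently,
each reference clock advances by some nonnegative amount, offsets are unchanged. -/
def ldelayed (v v' : N.LVal) : Prop :=
  ∃ δ : Fin N.k → ℝ, (∀ p, 0 ≤ δ p) ∧
    v' = fun y => match y with
      | .inl x => v (.inl x)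
      | .inr p => v (.inr p) + δ p

/-- Reset of the clocks in `R` in a global valuation. -/
noncomputable def greset (R : Set N.Clock) (v : N.GVal) : N.GVal :=
  fun y => match y with
    | .inl x => if x ∈ R then v (.inr ()) else v (.inl x)
    | .inr u => v (.inr u)

/-- Reset of the clocks in `R` in a local valuation: `x̃` is set to the local
time of the process owning `x`. -/
noncomputable def lreset (R : Set N.Clock) (v : N.LVal) : N.LVal :=
  fun y => match y with
    | .inl x => if x ∈ R then v (.inr (N.owner x)) else v (.inl x)
    | .inr p => v (.inr p)

/-- Global action step on action `b`. -/
def gact (b : N.Act) (c c' : N.State × N.GVal) : Prop :=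
  ∃ tr : ∀ p, p ∈ N.dom b → N.Loc p × Guard N.Clock × Set N.Clock × N.Loc p,
    (∀ p (h : p ∈ N.dom b),
      tr p h ∈ N.Trans b p ∧ (tr p h).1 = c.1 p ∧ (tr p h).2.2.2 = c'.1 p) ∧
    (∀ p, p ∉ N.dom b → c'.1 p = c.1 p) ∧
    (∀ p (h : p ∈ N.dom b), N.ggsat c.2 (tr p h).2.1) ∧
    c'.2 = N.greset {x | ∃ p h, x ∈ (tr p h).2.2.1} c.2

/-- Local action step on action `b`: additionally the reference clocks of the
processes in `dom b` must agree. -/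
def lact (b : N.Act) (c c' : N.State × N.LVal) : Prop :=
  ∃ tr : ∀ p, p ∈ N.dom b → N.Loc p × Guard N.Clock × Set N.Clock × N.Loc p,
    (∀ p (h : p ∈ N.dom b),
      tr p h ∈ N.Trans b p ∧ (tr p h).1 = c.1 p ∧ (tr p h).2.2.2 = c'.1 p) ∧
    (∀ p, p ∉ N.dom b → c'.1 p = c.1 p) ∧
    (∀ p ∈ N.dom b, ∀ p' ∈ N.dom b, c.2 (.inr p) = c.2 (.inr p')) ∧
    (∀ p (h : p ∈ N.dom b), N.lgsat c.2 (tr p h).2.1) ∧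
    c'.2 = N.lreset {x | ∃ p h, x ∈ (tr p h).2.2.1} c.2

/-- Global run on a word of actions: delays and action steps alternate,
starting and ending with a (possibly zero) delay. -/
inductive GRun : List N.Act → (N.State × N.GVal) → (N.State × N.GVal) → Prop
  | nil {q v} (δ : ℝ) (hδ : 0 ≤ δ) : GRun [] (q, v) (q, N.gdelay v δ)
  | cons {b u q v c1 c2} (δ : ℝ) (hδ : 0 ≤ δ)
      (hb : N.gact b (q, N.gdelay v δ) c1) (h : GRun u c1 c2) :
      GRun (b :: u) (q, v) c2

/-- Local run on a word of actions: sequences of local delays and local action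
steps alternate. -/
inductive LRun : List N.Act → (N.State × N.LVal) → (N.State × N.LVal) → Prop
  | nil {q v v'} (hd : N.ldelayed v v') : LRun [] (q, v) (q, v')
  | cons {b u q v v1 c1 c2} (hd : N.ldelayed v v1)
      (hb : N.lact b (q, v1) c1) (h : LRun u c1 c2) :
      LRun (b :: u) (q, v) c2

/-- Local run recording, for each action, its execution time: the common value
of the reference clocks of `dom b` when the step is taken. -/
inductive LRunT : List (N.Act × ℝ) → (N.State × N.LVal) → (N.State × N.LVal) → Prop
  | nil {q v v'} (hd : N.ldelayed v v') : LRunT [] (q, v) (q, v')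
  | cons {b θ u q v v1 c1 c2} (hd : N.ldelayed v v1)
      (hb : N.lact b (q, v1) c1) (hθ : ∀ p ∈ N.dom b, v1 (.inr p) = θ)
      (h : LRunT u c1 c2) :
      LRunT ((b, θ) :: u) (q, v) c2

/-- Equivalence of action sequences: generated by swapping adjacent actions
with disjoint domains. -/
inductive equiv : List N.Act → List N.Act → Prop
  | swap (u w : List N.Act) (a b : N.Act) (h : Disjoint (N.dom a) (N.dom b)) :
      equiv (u ++ a :: b :: w) (u ++ b :: a :: w)
  | refl (u : List N.Act) : equiv u u
  | trans {u v w} : equiv u v → equiv v w → equiv u w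

/-- A local valuation is synchronized if all reference clocks agree. -/
def Synchronized (v : N.LVal) : Prop :=
  ∀ p p' : Fin N.k, v (.inr p) = v (.inr p')

/-- The global valuation associated to a (synchronized) local valuation. -/
def toGlobal (v : N.LVal) : N.GVal :=
  fun y => match y with
    | .inl x => v (.inl x)
    | .inr _ => v (.inr ⟨0, N.kpos⟩)

/-- The synchronized local valuation associated to a global valuation. -/
def toLocal (v : N.GVal) : N.LVal :=
  fun y => match y with
    | .inl x => v (.inl x)
    | .inr _ => v (.inr ())

/-- The synchronized valuations of a set of local valuations. -/
def syncSet (S : Set N.LVal) : Set N.LVal := {v ∈ S | N.Synchronized v}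

/-- The set of local valuations defined by a list of difference constraints. -/
def lzset (L : List (DiffConstraint N.LVar)) : Set N.LVal :=
  {v | N.IsLVal v ∧ ∀ c ∈ L, csat v c}

/-- The set of global valuations defined by a list of difference constraints. -/
def gzset (L : List (DiffConstraint N.GVar)) : Set N.GVal :=
  {v | N.IsGVal v ∧ ∀ c ∈ L, csat v c}

/-- Local zones: sets of local valuations definable by difference constraints. -/
def IsLZone (S : Set N.LVal) : Prop := ∃ L, S = N.lzset L

/-- Global zones: sets of global valuations definable by difference constraints. -/
def IsGZone (S : Set N.GVal) : Prop := ∃ L, S = N.gzset L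

/-- Local-time elapse of a set of local valuations. -/
def lelapse (S : Set N.LVal) : Set N.LVal := {v' | ∃ v ∈ S, N.ldelayed v v'}

/-- Global time elapse of a set of global valuations. -/
def gelapse (S : Set N.GVal) : Set N.GVal :=
  {v' | ∃ v ∈ S, ∃ δ, 0 ≤ δ ∧ v' = N.gdelay v δ}

/-- Local zone graph step on action `b`:
`Z' = local-elapse([R](Z ∩ Z_g ∩ Z_sync))`, required nonempty. -/
def lzstep (b : N.Act) (c c' : N.State × Set N.LVal) : Prop :=
  ∃ tr : ∀ p, p ∈ N.dom b → N.Loc p × Guard N.Clock × Set N.Clock × N.Loc p,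
    (∀ p (h : p ∈ N.dom b),
      tr p h ∈ N.Trans b p ∧ (tr p h).1 = c.1 p ∧ (tr p h).2.2.2 = c'.1 p) ∧
    (∀ p, p ∉ N.dom b → c'.1 p = c.1 p) ∧
    c'.2 = N.lelapse ((N.lreset {x | ∃ p h, x ∈ (tr p h).2.2.1}) ''
      (c.2 ∩ {v | ∀ p (h : p ∈ N.dom b), N.lgsat v (tr p h).2.1}
           ∩ {v | ∀ p ∈ N.dom b, ∀ p' ∈ N.dom b, v (.inr p) = v (.inr p')})) ∧
    (c'.2).Nonempty

/-- Sequence of local zone graph steps along a word. -/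
inductive LZRun : List N.Act → (N.State × Set N.LVal) → (N.State × Set N.LVal) → Prop
  | nil (c) : LZRun [] c c
  | cons {b u c c1 c2} (hb : N.lzstep b c c1) (h : LZRun u c1 c2) :
      LZRun (b :: u) c c2

/-- The initial (discrete) state of the network. -/
def initState : N.State := N.init

/-- The initial global valuation: everything is `0`. -/
def gvalInit : N.GVal := fun _ => 0

/-- The initial local valuation: everything is `0`. -/
def lvalInit : N.LVal := fun _ => 0

/-- The initial node's zone in the local zone graph. -/
def lzoneInit : Set N.LVal := N.lelapse {N.lvalInit}

/-- State `q` is reachable in the global-time semantics. -/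
def GReach (q : N.State) : Prop :=
  ∃ u v, N.GRun u (N.initState, N.gvalInit) (q, v)

/-- State `q` is reachable in the local-time semantics. -/
def LReach (q : N.State) : Prop :=
  ∃ u v, N.LRun u (N.initState, N.lvalInit) (q, v)

/-- Time-abstract simulation between global valuations. -/
def TASim (sim : N.GVal → N.GVal → Prop) : Prop :=
  ∀ v1 v2, sim v1 v2 → ∀ q b δ1 q' v1', 0 ≤ δ1 →
    N.gact b (q, N.gdelay v1 δ1) (q', v1') →
    ∃ δ2, 0 ≤ δ2 ∧ ∃ v2', N.gact b (q, N.gdelay v2 δ2) (q', v2') ∧ sim v1' v2'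

end Network

/-- A local sync graph over a network `N`, based on an abstraction `abs` over
global zones: a subgraph of the local zone graph with covered/uncovered nodes,
satisfying conditions C0–C4. -/
structure SyncGraph (N : Network) (abs : Set N.GVal → Set N.GVal) where
  nodes : Set (N.State × Set N.LVal)
  covered : N.State × Set N.LVal → Prop
  edges : (N.State × Set N.LVal) → (N.State × Set N.LVal) → Prop
  edges_mem : ∀ s s', edges s s' → s ∈ nodes ∧ s' ∈ nodes
  edges_lzg : ∀ s s', edges s s' → ∃ b, N.lzstep b s s'
  init_mem : (N.initState, N.lzoneInit) ∈ nodes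
  init_unc : ¬ covered (N.initState, N.lzoneInit)
  reach : ∀ s ∈ nodes, Relation.ReflTransGen edges (N.initState, N.lzoneInit) s
  unc_succ : ∀ s ∈ nodes, ¬ covered s → ∀ b s', N.lzstep b s s' → edges s s'
  cov_sub : ∀ s ∈ nodes, covered s → ∃ s' ∈ nodes, ¬ covered s' ∧ s.1 = s'.1 ∧
    N.toGlobal '' N.syncSet s.2 ⊆ abs (N.toGlobal '' N.syncSet s'.2)
  cov_nosucc : ∀ s s', covered s → ¬ edges s s'

/-- A list of difference constraints is canonical (every constraint is tight):
no constraint is implied by the remaining ones. -/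
def canonicalL (N : Network) (L : List (DiffConstraint N.LVar)) : Prop :=
  ∀ c ∈ L, ∃ v, N.IsLVal v ∧ (∀ c' ∈ L, c' ≠ c → csat v c') ∧ ¬ csat v c

/-- Minea's region-like equivalence with maximal constant `cmax`. -/
def regEquiv {V : Type} (cmax : ℤ) (v1 v2 : V → ℝ) : Prop :=
  ∀ a b : V, (⌊v1 a - v1 b⌋ = ⌊v2 a - v2 b⌋) ∨
    (⌊v1 a - v1 b⌋ > cmax ∧ ⌊v2 a - v2 b⌋ > cmax) ∨
    (⌊v1 a - v1 b⌋ < -cmax ∧ ⌊v2 a - v2 b⌋ < -cmax)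

namespace Network

variable {N : Network}

lemma ldelayed_iff {v v' : N.LVal} : N.ldelayed v v' ↔
    ((∀ x, v' (.inl x) = v (.inl x)) ∧ ∀ p, v (.inr p) ≤ v' (.inr p)) := by
  constructor
  · rintro ⟨δ, hδ, rfl⟩
    exact ⟨fun x => rfl, fun p => le_add_of_nonneg_right (hδ p)⟩
  · rintro ⟨h1, h2⟩
    refine ⟨fun p => v' (.inr p) - v (.inr p), fun p => sub_nonneg.mpr (h2 p), ?_⟩
    funext y
    cases y with
    | inl x => exact h1 x
    | inr p => simp

lemma ldelayed_trans {v v' v'' : N.LVal} (h1 : N.ldelayed v v') (h2 : N.ldelayed v' v'') :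
    N.ldelayed v v'' := by
  rw [ldelayed_iff] at *
  exact ⟨fun x => (h2.1 x).trans (h1.1 x), fun p => (h1.2 p).trans (h2.2 p)⟩

lemma LRunT_delay {tw : List (N.Act × ℝ)} {q : N.State} {v v' : N.LVal}
    {c : N.State × N.LVal} (hd : N.ldelayed v v')
    (h : N.LRunT tw (q, v') c) : N.LRunT tw (q, v) c := by
  cases h with
  | nil hd2 => exact .nil (ldelayed_trans hd hd2)
  | cons hd2 hb hθ h => exact .cons (ldelayed_trans hd hd2) hb hθ h

lemma equiv_symm {u w : List N.Act} (h : N.equiv u w) : N.equiv w u := by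
  induction h with
  | swap u w a b h => exact .swap u w b a h.symm
  | refl u => exact .refl u
  | trans h1 h2 ih1 ih2 => exact .trans ih2 ih1

lemma equiv_cons (a : N.Act) {u w : List N.Act} (h : N.equiv u w) :
    N.equiv (a :: u) (a :: w) := by
  induction h with
  | swap u w x y h => exact .swap (a :: u) w x y h
  | refl u => exact .refl _
  | trans _ _ ih1 ih2 => exact .trans ih1 ih2

lemma lreset_inl (R : Set N.Clock) (v : N.LVal) (x : N.Clock) :
    N.lreset R v (.inl x) = if x ∈ R then v (.inr (N.owner x)) else v (.inl x) := rfl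

lemma lreset_inr (R : Set N.Clock) (v : N.LVal) (p : Fin N.k) :
    N.lreset R v (.inr p) = v (.inr p) := rfl

/-- Commutation: an adjacent out-of-order pair of actions has disjoint domains
and can be swapped. -/
lemma comm_swap {a b : N.Act} {θa θb : ℝ} {rest : List (N.Act × ℝ)} {q : N.State}
    {v : N.LVal} {cend : N.State × N.LVal} (hlt : θb < θa)
    (h : N.LRunT ((a, θa) :: (b, θb) :: rest) (q, v) cend) :
    Disjoint (N.dom a) (N.dom b) ∧ N.LRunT ((b, θb) :: (a, θa) :: rest) (q, v) cend := by
  cases h with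
  | @cons _ _ _ _ _ v1 c1 _ hd1 hba hθa h2 =>
    obtain ⟨q1, w1⟩ := c1
    cases h2 with
    | @cons _ _ _ _ _ v2 c2 _ hd2 hbb hθb h3 =>
      obtain ⟨q2, w2⟩ := c2
      obtain ⟨e1, l1⟩ := ldelayed_iff.mp hd1
      obtain ⟨e2, l2⟩ := ldelayed_iff.mp hd2
      obtain ⟨tra, htra, hq1a, hsynca, hga, hw1⟩ := hba
      obtain ⟨trb, htrb, hq2b, hsyncb, hgb, hw2⟩ := hbb
      dsimp only at htra hq1a hsynca hga hw1 htrb hq2b hsyncb hgb hw2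
      set Ra : Set N.Clock := {x | ∃ p h, x ∈ (tra p h).2.2.1} with hRadef
      set Rb : Set N.Clock := {x | ∃ p h, x ∈ (trb p h).2.2.1} with hRbdef
      have hRa : ∀ x ∈ Ra, N.owner x ∈ N.dom a := by
        rintro x ⟨p, hp, hx⟩
        have := (N.trans_wf a p _ (htra p hp).1).2 x hx
        rw [this]; exact hp
      have hRb : ∀ x ∈ Rb, N.owner x ∈ N.dom b := by
        rintro x ⟨p, hp, hx⟩
        have := (N.trans_wf b p _ (htrb p hp).1).2 x hx
        rw [this]; exact hp
      have hw1inr : ∀ p, w1 (.inr p) = v1 (.inr p) := fun p => by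
        rw [hw1]; rfl
      have hw1mem : ∀ x ∈ Ra, w1 (.inl x) = v1 (.inr (N.owner x)) := fun x hx => by
        rw [hw1, lreset_inl, if_pos hx]
      have hw1not : ∀ x ∉ Ra, w1 (.inl x) = v1 (.inl x) := fun x hx => by
        rw [hw1, lreset_inl, if_neg hx]
      have hw2inr : ∀ p, w2 (.inr p) = v2 (.inr p) := fun p => by
        rw [hw2]; rfl
      have hw2mem : ∀ x ∈ Rb, w2 (.inl x) = v2 (.inr (N.owner x)) := fun x hx => by
        rw [hw2, lreset_inl, if_pos hx]
      have hw2not : ∀ x ∉ Rb, w2 (.inl x) = v2 (.inl x) := fun x hx => by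
        rw [hw2, lreset_inl, if_neg hx]
      have hdisj : Disjoint (N.dom a) (N.dom b) := by
        rw [Finset.disjoint_left]
        intro p hpa hpb
        have hl := l2 p
        rw [hw1inr p, hθa p hpa, hθb p hpb] at hl
        exact absurd hl (not_le.mpr hlt)
      -- the new intermediate valuations
      set v1' : N.LVal := fun y => match y with
        | .inl x => v (.inl x)
        | .inr p => if p ∈ N.dom b then v2 (.inr p) else v (.inr p) with hv1'def
      have hv1'inl : ∀ x, v1' (.inl x) = v (.inl x) := fun x => by rw [hv1'def]
      have hv1'inr : ∀ p, v1' (.inr p)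
          = if p ∈ N.dom b then v2 (.inr p) else v (.inr p) := fun p => by rw [hv1'def]
      set q1' : N.State := fun p => if h : p ∈ N.dom b then (trb p h).2.2.2 else q p
        with hq1'def
      have hq1'pos : ∀ p (h : p ∈ N.dom b), q1' p = (trb p h).2.2.2 := fun p h => by
        rw [hq1'def]; exact dif_pos h
      have hq1'neg : ∀ p, p ∉ N.dom b → q1' p = q p := fun p h => by
        rw [hq1'def]; exact dif_neg h
      set v2'' : N.LVal := fun y => match y with
        | .inl x => N.lreset Rb v1' (.inl x)
        | .inr p => if p ∈ N.dom a then θa else v1' (.inr p) with hv2''def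
      have hv2''inl : ∀ x, v2'' (.inl x) = N.lreset Rb v1' (.inl x) := fun x => by
        rw [hv2''def]
      have hv2''inr : ∀ p, v2'' (.inr p)
          = if p ∈ N.dom a then θa else v1' (.inr p) := fun p => by rw [hv2''def]
      have hanb : ∀ p, p ∈ N.dom a → p ∉ N.dom b := fun p hp =>
        Finset.disjoint_left.mp hdisj hp
      have hbna : ∀ p, p ∈ N.dom b → p ∉ N.dom a := fun p hp h' =>
        Finset.disjoint_left.mp hdisj h' hp
      refine ⟨hdisj, LRunT.cons (v1 := v1') (c1 := (q1', N.lreset Rb v1')) ?_ ?_ ?_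
        (LRunT.cons (v1 := v2'') (c1 := (q2, N.lreset Ra v2'')) ?_ ?_ ?_
          (LRunT_delay ?_ h3))⟩
      · -- ldelayed v v1'
        rw [ldelayed_iff]
        refine ⟨hv1'inl, fun p => ?_⟩
        rw [hv1'inr]
        by_cases hp : p ∈ N.dom b
        · rw [if_pos hp]
          calc v (.inr p) ≤ v1 (.inr p) := l1 p
            _ = w1 (.inr p) := (hw1inr p).symm
            _ ≤ v2 (.inr p) := l2 p
        · rw [if_neg hp]
      · -- lact b (q, v1') (q1', lreset Rb v1')
        refine ⟨trb, ?_, ?_, ?_, ?_, by rw [hRbdef]⟩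
        · intro p hp
          refine ⟨(htrb p hp).1, ?_, (hq1'pos p hp).symm⟩
          exact ((htrb p hp).2.1).trans (hq1a p (hbna p hp))
        · intro p hp
          exact hq1'neg p hp
        · intro p hp p' hp'
          dsimp only
          rw [hv1'inr, if_pos hp, hv1'inr, if_pos hp', hθb p hp, hθb p' hp']
        · intro p hp
          dsimp only
          intro c hc
          have hown : N.owner c.1 = p := (N.trans_wf b p _ (htrb p hp).1).1 c hc
          have hmem : N.owner c.1 ∈ N.dom b := by rw [hown]; exact hp
          have h1 : v1' (.inr (N.owner c.1)) = v2 (.inr (N.owner c.1)) := by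
            rw [hv1'inr, if_pos hmem]
          have h2 : v1' (.inl c.1) = v2 (.inl c.1) := by
            have hnot : c.1 ∉ Ra := fun hmemRa =>
              (Finset.disjoint_left.mp hdisj (hRa _ hmemRa)) hmem
            rw [hv1'inl, e2, hw1not _ hnot, e1]
          rw [h1, h2]
          exact hgb p hp c hc
      · -- times of b
        intro p hp
        rw [hv1'inr, if_pos hp]
        exact hθb p hp
      · -- ldelayed (lreset Rb v1') v2''
        rw [ldelayed_iff]
        refine ⟨hv2''inl, fun p => ?_⟩
        rw [hv2''inr, lreset_inr]
        by_cases hp : p ∈ N.dom a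
        · rw [if_pos hp, hv1'inr, if_neg (hanb p hp), ← hθa p hp]
          exact l1 p
        · rw [if_neg hp]
      · -- lact a (q1', v2'') (q2, lreset Ra v2'')
        refine ⟨tra, ?_, ?_, ?_, ?_, by rw [hRadef]⟩
        · intro p hp
          refine ⟨(htra p hp).1, ?_, ?_⟩
          · exact ((htra p hp).2.1).trans (hq1'neg p (hanb p hp)).symm
          · exact ((htra p hp).2.2).trans (hq2b p (hanb p hp)).symm
        · intro p hp
          dsimp only
          by_cases hpb : p ∈ N.dom b
          · rw [hq1'pos p hpb]
            exact ((htrb p hpb).2.2).symm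
          · rw [hq1'neg p hpb]
            exact (hq2b p hpb).trans (hq1a p hp)
        · intro p hp p' hp'
          dsimp only
          rw [hv2''inr, if_pos hp, hv2''inr, if_pos hp']
        · intro p hp
          dsimp only
          intro c hc
          have hown : N.owner c.1 = p := (N.trans_wf a p _ (htra p hp).1).1 c hc
          have hmem : N.owner c.1 ∈ N.dom a := by rw [hown]; exact hp
          have h1 : v2'' (.inr (N.owner c.1)) = v1 (.inr (N.owner c.1)) := by
            rw [hv2''inr, if_pos hmem, hθa _ hmem]
          have h2 : v2'' (.inl c.1) = v1 (.inl c.1) := by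
            rw [hv2''inl, lreset_inl, if_neg, hv1'inl, e1]
            intro hmemRb
            exact (Finset.disjoint_left.mp hdisj hmem) (hRb _ hmemRb)
          rw [h1, h2]
          exact hga p hp c hc
      · -- times of a
        intro p hp
        rw [hv2''inr, if_pos hp]
      · -- ldelayed (lreset Ra v2'') w2
        rw [ldelayed_iff]
        constructor
        · intro x
          by_cases hxa : x ∈ Ra
          · have hxo : N.owner x ∈ N.dom a := hRa x hxa
            have hxb : x ∉ Rb := fun hh => (Finset.disjoint_left.mp hdisj hxo) (hRb x hh)
            rw [hw2not x hxb, e2, hw1mem x hxa, hθa _ hxo, lreset_inl, if_pos hxa,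
              hv2''inr, if_pos hxo]
          · by_cases hxb : x ∈ Rb
            · have hxo : N.owner x ∈ N.dom b := hRb x hxb
              rw [hw2mem x hxb, lreset_inl, if_neg hxa, hv2''inl, lreset_inl,
                if_pos hxb, hv1'inr, if_pos hxo]
            · rw [hw2not x hxb, e2, hw1not x hxa, e1, lreset_inl, if_neg hxa,
                hv2''inl, lreset_inl, if_neg hxb, hv1'inl]
        · intro p
          rw [hw2inr, lreset_inr, hv2''inr]
          by_cases hp : p ∈ N.dom a
          · rw [if_pos hp, ← hθa p hp, ← hw1inr p]
            exact l2 p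
          · rw [if_neg hp, hv1'inr]
            by_cases hpb : p ∈ N.dom b
            · rw [if_pos hpb]
            · rw [if_neg hpb]
              calc v (.inr p) ≤ v1 (.inr p) := l1 p
                _ = w1 (.inr p) := (hw1inr p).symm
                _ ≤ v2 (.inr p) := l2 p

/-- Inserting the head action of a run into an already sorted tail. -/
lemma insertRun : ∀ (tw : List (N.Act × ℝ)) (a : N.Act) (θ : ℝ) (q : N.State)
    (v : N.LVal) (cend : N.State × N.LVal),
    N.LRunT ((a, θ) :: tw) (q, v) cend → List.Chain' (· ≤ ·) (tw.map Prod.snd) →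
    ∃ tw' : List (N.Act × ℝ), tw'.Perm ((a, θ) :: tw) ∧
      N.equiv (tw'.map Prod.fst) (((a, θ) :: tw).map Prod.fst) ∧
      List.Chain' (· ≤ ·) (tw'.map Prod.snd) ∧ N.LRunT tw' (q, v) cend := by
  intro tw
  induction tw with
  | nil =>
    intro a θ q v cend h _
    exact ⟨[(a, θ)], .refl _, .refl _, List.isChain_singleton _, h⟩
  | cons hd rest ih =>
    obtain ⟨b, θb⟩ := hd
    intro a θ q v cend h hsorted
    by_cases hle : θ ≤ θb
    · refine ⟨(a, θ) :: (b, θb) :: rest, .refl _, .refl _, ?_, h⟩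
      rw [List.map_cons, List.Chain', List.isChain_cons]
      refine ⟨fun y hy => ?_, hsorted⟩
      rw [List.map_cons, List.head?_cons, Option.mem_def, Option.some.injEq] at hy
      exact hy ▸ hle
    · have hlt : θb < θ := lt_of_not_ge hle
      obtain ⟨hdisj, h'⟩ := comm_swap hlt h
      cases h' with
      | @cons _ _ _ _ _ v1 c1 _ hdel hb hθ h2 =>
        obtain ⟨q1, w1⟩ := c1
        have htail : List.Chain' (· ≤ ·) (rest.map Prod.snd) := by
          rw [List.map_cons] at hsorted
          exact hsorted.tail
        obtain ⟨tw2, hperm2, hequiv2, hchain2, hrun2⟩ := ih a θ q1 w1 cend h2 htail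
        have hbound : ∀ z ∈ tw2.map Prod.snd, θb ≤ z := by
          intro z hz
          obtain ⟨⟨c, θc⟩, hc, rfl⟩ := List.mem_map.mp hz
          have hmem := hperm2.mem_iff.mp hc
          rcases List.mem_cons.mp hmem with h1 | h1
          · rw [h1]; exact hlt.le
          · have hpw := List.isChain_iff_pairwise.mp (by
              rw [List.map_cons] at hsorted; exact hsorted)
            exact List.rel_of_pairwise_cons hpw
              (List.mem_map.mpr ⟨(c, θc), h1, rfl⟩)
        refine ⟨(b, θb) :: tw2, ?_, ?_, ?_, .cons hdel hb hθ hrun2⟩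
        · exact (hperm2.cons _).trans (List.Perm.swap _ _ _)
        · refine Network.equiv.trans (equiv_cons b hequiv2) ?_
          exact Network.equiv.swap [] _ b a hdisj.symm
        · rw [List.map_cons, List.Chain', List.isChain_cons]
          refine ⟨fun y hy => hbound y (List.mem_of_mem_head? hy), hchain2⟩

lemma sortRun : ∀ (tw : List (N.Act × ℝ)) (q : N.State) (v : N.LVal)
    (cend : N.State × N.LVal), N.LRunT tw (q, v) cend →
    ∃ tw' : List (N.Act × ℝ), tw'.Perm tw ∧
      N.equiv (tw'.map Prod.fst) (tw.map Prod.fst) ∧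
      List.Chain' (· ≤ ·) (tw'.map Prod.snd) ∧ N.LRunT tw' (q, v) cend := by
  intro tw
  induction tw with
  | nil =>
    intro q v cend h
    exact ⟨[], .refl _, .refl _, List.isChain_nil, h⟩
  | cons hd tl ih =>
    obtain ⟨a, θ⟩ := hd
    intro q v cend h
    cases h with
    | @cons _ _ _ _ _ v1 c1 _ hdel hb hθ h2 =>
      obtain ⟨q1, w1⟩ := c1
      obtain ⟨tw1, hperm1, hequiv1, hchain1, hrun1⟩ := ih q1 w1 cend h2
      have hrun : N.LRunT ((a, θ) :: tw1) (q, v) cend := .cons hdel hb hθ hrun1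
      obtain ⟨tw', hperm', hequiv', hchain', hrun'⟩ :=
        insertRun tw1 a θ q v cend hrun hchain1
      refine ⟨tw', hperm'.trans (hperm1.cons _), ?_, hchain', hrun'⟩
      refine hequiv'.trans ?_
      simpa using equiv_cons a hequiv1

lemma LRun_toT {u : List N.Act} {c cend : N.State × N.LVal} (h : N.LRun u c cend) :
    ∃ tw : List (N.Act × ℝ), tw.map Prod.fst = u ∧ N.LRunT tw c cend := by
  induction h with
  | nil hd => exact ⟨[], rfl, .nil hd⟩
  | @cons b u q v v1 c1 c2 hd hb _ ih =>
    obtain ⟨tw, htw, hrt⟩ := ih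
    by_cases hne : (N.dom b).Nonempty
    · obtain ⟨p0, hp0⟩ := hne
      refine ⟨(b, v1 (.inr p0)) :: tw, by simp [htw], .cons hd hb ?_ hrt⟩
      intro p hp
      exact hb.choose_spec.2.2.1 p hp p0 hp0
    · exact ⟨(b, 0) :: tw, by simp [htw], .cons hd hb (fun p hp => absurd ⟨p, hp⟩ hne) hrt⟩

end Network

theorem stmt3 (N : Network) (u : List N.Act) (q : N.State) (v : N.LVal)
    (hv : N.IsLVal v) (q' : N.State) (v' : N.LVal)
    (hr : N.LRun u (q, v) (q', v')) :
    ∃ tw : List (N.Act × ℝ), N.equiv (tw.map Prod.fst) u ∧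
      List.Chain' (· ≤ ·) (tw.map Prod.snd) ∧
      N.LRunT tw (q, v) (q', v') := by
  obtain ⟨tw0, htw0, hrt⟩ := N.LRun_toT hr
  obtain ⟨tw, _, hequiv, hchain, hrun⟩ := N.sortRun tw0 q v (q', v') hrt
  exact ⟨tw, htw0 ▸ hequiv, hchain, hrun⟩
end

section
/- Equivalence of reachability in global and local semantics: a state q of a network of timed automata is reachable by a global run from the initial configuration if and only if it is reachable by a local run from the initial local configuration. -/
open Classical

namespace Network

variable {N : Network}

lemma ldelayed_refl (v : N.LVal) : N.ldelayed v v := by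
  refine ⟨fun _ => 0, fun _ => le_rfl, ?_⟩
  funext y; cases y <;> simp

lemma ldelayed_inl {v v' : N.LVal} (h : N.ldelayed v v') (x : N.Clock) :
    v' (.inl x) = v (.inl x) := by
  obtain ⟨δ, -, rfl⟩ := h; rfl

lemma ldelayed_inr_le {v v' : N.LVal} (h : N.ldelayed v v') (p : Fin N.k) :
    v (.inr p) ≤ v' (.inr p) := by
  obtain ⟨δ, hδ, rfl⟩ := h
  simpa using hδ p

lemma ldelayed_trans_s6 {v1 v2 v3 : N.LVal} (h1 : N.ldelayed v1 v2)
    (h2 : N.ldelayed v2 v3) : N.ldelayed v1 v3 := by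
  obtain ⟨δ1, hδ1, rfl⟩ := h1
  obtain ⟨δ2, hδ2, rfl⟩ := h2
  refine ⟨fun p => δ1 p + δ2 p, fun p => add_nonneg (hδ1 p) (hδ2 p), ?_⟩
  funext y; cases y <;> simp [add_assoc]

/-- Prepend a local delay to a local (timed) run. -/
lemma LRunT.prepend {u q} {v v' : N.LVal} {c2} (hd : N.ldelayed v v')
    (h : N.LRunT u (q, v') c2) : N.LRunT u (q, v) c2 := by
  cases h with
  | nil hd' => exact .nil (ldelayed_trans_s6 hd hd')
  | cons hd' hb hθ h' => exact .cons (ldelayed_trans_s6 hd hd') hb hθ h'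

lemma LRunT.inv_cons {b θ u c c2} (h : N.LRunT ((b, θ) :: u) c c2) :
    ∃ v1 c1, N.ldelayed c.2 v1 ∧ N.lact b (c.1, v1) c1 ∧
      (∀ p ∈ N.dom b, v1 (.inr p) = θ) ∧ N.LRunT u c1 c2 := by
  obtain ⟨q, v⟩ := c
  cases h with
  | cons hd hb hθ h' => exact ⟨_, _, hd, hb, hθ, h'⟩

/-- Reference clocks never decrease along a run: any action in the run
involving process `p` happens no earlier than `p`'s current time. -/
lemma LRunT.mono {u c c2} (h : N.LRunT u c c2) :
    ∀ e ∈ u, ∀ p ∈ N.dom e.1, c.2 (.inr p) ≤ e.2 := by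
  induction h with
  | nil => simp
  | @cons b θ u q v v1 c1 c2 hd hb hθ h ih =>
    intro e he p hp
    rcases List.mem_cons.mp he with rfl | he
    · exact (ldelayed_inr_le hd p).trans (le_of_eq (hθ p hp))
    · obtain ⟨tr, -, -, -, -, hres⟩ := hb
      have h1 : c1.2 (.inr p) ≤ e.2 := ih e he p hp
      have h2 : c1.2 (.inr p) = v1 (.inr p) := by rw [hres]; rfl
      exact le_trans (le_trans (ldelayed_inr_le hd p) h2.ge) h1

/-- From an untimed local run, build a timed local run dropping actions with
empty domains. -/
lemma LRun.toT {u c c2} (h : N.LRun u c c2) :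
    ∃ ut, (∀ e ∈ ut, (N.dom e.1).Nonempty) ∧ N.LRunT ut c c2 := by
  induction h with
  | nil hd => exact ⟨[], by simp, .nil hd⟩
  | @cons b u q v v1 c1 c2 hd hb h ih =>
    obtain ⟨ut, hne, ht⟩ := ih
    by_cases hdom : (N.dom b).Nonempty
    · obtain ⟨p0, hp0⟩ := hdom
      have hb' := hb
      obtain ⟨tr, -, -, hsync, -, -⟩ := hb'
      refine ⟨(b, v1 (.inr p0)) :: ut, ?_, .cons hd hb ?_ ht⟩
      · intro e he
        rcases List.mem_cons.mp he with rfl | he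
        · exact ⟨p0, hp0⟩
        · exact hne e he
      · intro p hp; exact hsync p hp p0 hp0
    · obtain ⟨tr, -, hout, -, -, hres⟩ := hb
      have hc1 : c1 = (q, v1) := by
        obtain ⟨q1, w1⟩ := c1
        have hq : q1 = q := by
          funext p
          exact hout p (fun hp => hdom ⟨p, hp⟩)
        have hw : w1 = v1 := by
          have hres' : w1 = N.lreset {x | ∃ p, ∃ (h : p ∈ N.dom b), x ∈ (tr p h).2.2.1} v1 := hres
          rw [hres']
          funext y
          cases y with
          | inl x =>
            rw [lreset_inl, if_neg]
            rintro ⟨p, hp, -⟩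
            exact hdom ⟨p, hp⟩
          | inr p => rfl
        simp [hq, hw]
      rw [hc1] at ht
      exact ⟨ut, hne, ht.prepend hd⟩

lemma greset_inl (R : Set N.Clock) (v : N.GVal) (x : N.Clock) :
    N.greset R v (.inl x) = if x ∈ R then v (.inr ()) else v (.inl x) := rfl

lemma greset_inr (R : Set N.Clock) (v : N.GVal) (u : Unit) :
    N.greset R v (.inr u) = v (.inr u) := rfl

lemma lact_inr {b : N.Act} {c c' : N.State × N.LVal} (h : N.lact b c c') (p : Fin N.k) :
    c'.2 (.inr p) = c.2 (.inr p) := by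
  obtain ⟨tr, -, -, -, -, hres⟩ := h
  rw [hres]; rfl

/-- Two adjacent steps with disjoint domains can be swapped. -/
lemma swap_steps {a b : N.Act} (hdisj : Disjoint (N.dom a) (N.dom b))
    {q : N.State} {v v1 : N.LVal} {c1 : N.State × N.LVal} {v2 : N.LVal}
    {cB : N.State × N.LVal}
    (hd1 : N.ldelayed v v1) (ha : N.lact a (q, v1) c1)
    (hd2 : N.ldelayed c1.2 v2) (hb : N.lact b (c1.1, v2) cB) :
    ∃ (v1' : N.LVal) (c1' : N.State × N.LVal) (v2' w' : N.LVal), N.ldelayed v v1' ∧ N.lact b (q, v1') c1' ∧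
      (∀ p ∈ N.dom b, v1' (.inr p) = v2 (.inr p)) ∧
      N.ldelayed c1'.2 v2' ∧ N.lact a (c1'.1, v2') (cB.1, w') ∧
      (∀ p ∈ N.dom a, v2' (.inr p) = v1 (.inr p)) ∧
      N.ldelayed w' cB.2 := by
  have hab : ∀ p ∈ N.dom a, p ∉ N.dom b := fun p hp hq => Finset.disjoint_left.mp hdisj hp hq
  have hba : ∀ p ∈ N.dom b, p ∉ N.dom a := fun p hp hq => Finset.disjoint_left.mp hdisj hq hp
  obtain ⟨tra, htra, houta, hsynca, hga, hresa⟩ := ha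
  obtain ⟨trb, htrb, houtb, hsyncb, hgb, hresb⟩ := hb
  obtain ⟨d1, hd1n, hv1e⟩ := hd1
  obtain ⟨d2, hd2n, hv2e⟩ := hd2
  have hv1l : ∀ x, v1 (.inl x) = v (.inl x) := fun x => by rw [hv1e]
  have hv1r : ∀ p, v1 (.inr p) = v (.inr p) + d1 p := fun p => by rw [hv1e]
  have hv2l : ∀ x, v2 (.inl x) = c1.2 (.inl x) := fun x => by rw [hv2e]
  have hv2r : ∀ p, v2 (.inr p) = c1.2 (.inr p) + d2 p := fun p => by rw [hv2e]
  set Ra : Set N.Clock := {x | ∃ p, ∃ (h : p ∈ N.dom a), x ∈ (tra p h).2.2.1} with hRadef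
  set Rb : Set N.Clock := {x | ∃ p, ∃ (h : p ∈ N.dom b), x ∈ (trb p h).2.2.1} with hRbdef
  have hRaA : ∀ x ∈ Ra, N.owner x ∈ N.dom a := by
    rintro x ⟨p, hp, hx⟩
    rw [(N.trans_wf a p _ (htra p hp).1).2 x hx]; exact hp
  have hRbB : ∀ x ∈ Rb, N.owner x ∈ N.dom b := by
    rintro x ⟨p, hp, hx⟩
    rw [(N.trans_wf b p _ (htrb p hp).1).2 x hx]; exact hp
  have hc1r : ∀ p, c1.2 (.inr p) = v1 (.inr p) := fun p => by rw [hresa]; rfl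
  have hc1l_in : ∀ x ∈ Ra, c1.2 (.inl x) = v1 (.inr (N.owner x)) := fun x hx => by
    rw [hresa, lreset_inl, if_pos hx]
  have hc1l_out : ∀ x, x ∉ Ra → c1.2 (.inl x) = v1 (.inl x) := fun x hx => by
    rw [hresa, lreset_inl, if_neg hx]
  -- offsets of clocks not in `Ra` are unchanged all along
  have hv2l_in : ∀ x ∈ Ra, v2 (.inl x) = v1 (.inr (N.owner x)) := fun x hx => by
    rw [hv2l, hc1l_in x hx]
  have hv2l_out : ∀ x, x ∉ Ra → v2 (.inl x) = v (.inl x) := fun x hx => by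
    rw [hv2l, hc1l_out x hx, hv1l]
  set v1' : N.LVal := fun y => match y with
    | .inl x => v (.inl x)
    | .inr p => if p ∈ N.dom a then v (.inr p) else v2 (.inr p) with hv1'def
  have hv1'l : ∀ x, v1' (.inl x) = v (.inl x) := fun x => rfl
  have hv1'r : ∀ p, v1' (.inr p) =
      if p ∈ N.dom a then v (.inr p) else v2 (.inr p) := fun p => rfl
  set q' : N.State := fun p => if h : p ∈ N.dom b then (trb p h).2.2.2 else q p with hq'def
  set w1' : N.LVal := N.lreset Rb v1' with hw1'def
  have hw1'r : ∀ p, w1' (.inr p) = v1' (.inr p) := fun p => by rw [hw1'def, lreset_inr]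
  have hw1'l_in : ∀ x ∈ Rb, w1' (.inl x) = v1' (.inr (N.owner x)) := fun x hx => by
    rw [hw1'def, lreset_inl, if_pos hx]
  have hw1'l_out : ∀ x, x ∉ Rb → w1' (.inl x) = v (.inl x) := fun x hx => by
    rw [hw1'def, lreset_inl, if_neg hx, hv1'l]
  set v2' : N.LVal := fun y => match y with
    | .inl x => w1' (.inl x)
    | .inr p => if p ∈ N.dom a then v1 (.inr p) else w1' (.inr p) with hv2'def
  have hv2'l : ∀ x, v2' (.inl x) = w1' (.inl x) := fun x => rfl
  have hv2'r : ∀ p, v2' (.inr p) =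
      if p ∈ N.dom a then v1 (.inr p) else w1' (.inr p) := fun p => rfl
  set w' : N.LVal := N.lreset Ra v2' with hw'def
  have hcBr : ∀ p, cB.2 (.inr p) = v2 (.inr p) := fun p => by rw [hresb]; rfl
  have hcBl_in : ∀ x ∈ Rb, cB.2 (.inl x) = v2 (.inr (N.owner x)) := fun x hx => by
    rw [hresb, lreset_inl, if_pos hx]
  have hcBl_out : ∀ x, x ∉ Rb → cB.2 (.inl x) = v2 (.inl x) := fun x hx => by
    rw [hresb, lreset_inl, if_neg hx]
  have hRaRb : ∀ x, x ∈ Ra → x ∉ Rb := fun x hx hx' => hab _ (hRaA x hx) (hRbB x hx')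
  have hRbRa : ∀ x, x ∈ Rb → x ∉ Ra := fun x hx hx' => hab _ (hRaA x hx') (hRbB x hx)
  refine ⟨v1', (q', w1'), v2', w', ?_, ?_, ?_, ?_, ?_, ?_, ?_⟩
  · -- ldelayed v v1'
    refine ⟨fun p => if p ∈ N.dom a then 0 else d1 p + d2 p,
      fun p => by by_cases hp : p ∈ N.dom a <;>
        simp [hp, add_nonneg (hd1n p) (hd2n p)], ?_⟩
    funext y
    cases y with
    | inl x => rfl
    | inr p =>
      show v1' (.inr p) = v (.inr p) + (if p ∈ N.dom a then 0 else d1 p + d2 p)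
      rw [hv1'r]
      by_cases hp : p ∈ N.dom a
      · rw [if_pos hp, if_pos hp, add_zero]
      · rw [if_neg hp, if_neg hp, hv2r, hc1r, hv1r, add_assoc]
  · -- lact b (q, v1') (q', w1')
    refine ⟨trb, fun p hp => ⟨(htrb p hp).1, ?_, ?_⟩, ?_, ?_, ?_, rfl⟩
    · exact ((htrb p hp).2.1).trans (houta p (hba p hp))
    · show (trb p hp).2.2.2 = if h : p ∈ N.dom b then (trb p h).2.2.2 else q p
      rw [dif_pos hp]
    · intro p hp
      show (if h : p ∈ N.dom b then (trb p h).2.2.2 else q p) = q p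
      rw [dif_neg hp]
    · intro p hp p' hp'
      show v1' (.inr p) = v1' (.inr p')
      rw [hv1'r, hv1'r, if_neg (hba p hp), if_neg (hba p' hp')]
      exact hsyncb p hp p' hp'
    · intro p hp cg hcg
      have hown : N.owner cg.1 = p := (N.trans_wf b p _ (htrb p hp).1).1 cg hcg
      have hownb : N.owner cg.1 ∈ N.dom b := hown ▸ hp
      have e1 : v1' (.inr (N.owner cg.1)) = v2 (.inr (N.owner cg.1)) := by
        rw [hv1'r, if_neg (hba _ hownb)]
      have e2 : v1' (.inl cg.1) = v2 (.inl cg.1) := by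
        rw [hv1'l, hv2l_out cg.1 (fun hmem => hab _ (hRaA _ hmem) hownb)]
      have := hgb p hp cg hcg
      show Cmp.sat _ (v1' (.inr (N.owner cg.1)) - v1' (.inl cg.1)) _
      rw [e1, e2]
      exact this
  · -- reference clocks of dom b
    intro p hp
    rw [hv1'r, if_neg (hba p hp)]
  · -- ldelayed w1' v2'
    refine ⟨fun p => if p ∈ N.dom a then d1 p else 0,
      fun p => by by_cases hp : p ∈ N.dom a <;> simp [hp, hd1n p], ?_⟩
    funext y
    cases y with
    | inl x => rfl
    | inr p =>
      show v2' (.inr p) = w1' (.inr p) + (if p ∈ N.dom a then d1 p else 0)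
      rw [hv2'r, hw1'r, hv1'r]
      by_cases hp : p ∈ N.dom a
      · rw [if_pos hp, if_pos hp, if_pos hp, hv1r]
      · rw [if_neg hp, if_neg hp, if_neg hp, add_zero]
  · -- lact a (q', v2') (cB.1, w')
    refine ⟨tra, fun p hp => ⟨(htra p hp).1, ?_, ?_⟩, ?_, ?_, ?_, rfl⟩
    · show (tra p hp).1 = if h : p ∈ N.dom b then (trb p h).2.2.2 else q p
      rw [dif_neg (hab p hp)]
      exact (htra p hp).2.1
    · exact ((htra p hp).2.2).trans (houtb p (hab p hp)).symm
    · intro p hp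
      show cB.1 p = if h : p ∈ N.dom b then (trb p h).2.2.2 else q p
      by_cases hpb : p ∈ N.dom b
      · rw [dif_pos hpb]; exact ((htrb p hpb).2.2).symm
      · rw [dif_neg hpb]
        exact (houtb p hpb).trans (houta p hp)
    · intro p hp p' hp'
      show v2' (.inr p) = v2' (.inr p')
      rw [hv2'r, hv2'r, if_pos hp, if_pos hp']
      exact hsynca p hp p' hp'
    · intro p hp cg hcg
      have hown : N.owner cg.1 = p := (N.trans_wf a p _ (htra p hp).1).1 cg hcg
      have howna : N.owner cg.1 ∈ N.dom a := hown ▸ hp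
      have e1 : v2' (.inr (N.owner cg.1)) = v1 (.inr (N.owner cg.1)) := by
        rw [hv2'r, if_pos howna]
      have e2 : v2' (.inl cg.1) = v1 (.inl cg.1) := by
        rw [hv2'l, hw1'l_out cg.1 (fun hmem => hab _ howna (hRbB _ hmem)), hv1l]
      have := hga p hp cg hcg
      show Cmp.sat _ (v2' (.inr (N.owner cg.1)) - v2' (.inl cg.1)) _
      rw [e1, e2]
      exact this
  · -- reference clocks of dom a
    intro p hp
    rw [hv2'r, if_pos hp]
  · -- ldelayed w' cB.2
    refine ⟨fun p => if p ∈ N.dom a then d2 p else 0,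
      fun p => by by_cases hp : p ∈ N.dom a <;> simp [hp, hd2n p], ?_⟩
    funext y
    cases y with
    | inl x =>
      show cB.2 (.inl x) = w' (.inl x)
      by_cases hxa : x ∈ Ra
      · rw [hcBl_out x (hRaRb x hxa), hw'def, lreset_inl, if_pos hxa,
          hv2'r, if_pos (hRaA x hxa), hv2l_in x hxa]
      · rw [hw'def, lreset_inl, if_neg hxa, hv2'l]
        by_cases hxb : x ∈ Rb
        · rw [hcBl_in x hxb, hw1'l_in x hxb, hv1'r, if_neg (hba _ (hRbB x hxb))]
        · rw [hcBl_out x hxb, hw1'l_out x hxb, hv2l_out x hxa]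
    | inr p =>
      show cB.2 (.inr p) = w' (.inr p) + (if p ∈ N.dom a then d2 p else 0)
      rw [hcBr, hw'def, lreset_inr, hv2'r]
      by_cases hp : p ∈ N.dom a
      · rw [if_pos hp, if_pos hp, hv2r, hc1r]
      · rw [if_neg hp, if_neg hp, add_zero, hw1'r, hv1'r, if_neg hp]

/-- An action whose time is smaller than all the actions before it can be
moved to the front of a run. -/
lemma moveMin : ∀ (u1 : List (N.Act × ℝ)) {e : N.Act × ℝ} {u2 c c2},
    N.LRunT (u1 ++ e :: u2) c c2 → (∀ f ∈ u1, e.2 < f.2) →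
    N.LRunT (e :: (u1 ++ u2)) c c2 := by
  intro u1
  induction u1 with
  | nil => intro e u2 c c2 h _; exact h
  | cons a t ih =>
    intro e u2 c c2 h hmin
    obtain ⟨ab, aθ⟩ := a
    obtain ⟨eb, eθ⟩ := e
    obtain ⟨q, v⟩ := c
    rw [List.cons_append] at h
    obtain ⟨v1, c1, hd, ha, hθa, htail⟩ := h.inv_cons
    have hrest := ih htail (fun f hf => hmin f (List.mem_cons_of_mem _ hf))
    obtain ⟨v2, cB, hd2, hbe, hθe, htail2⟩ := hrest.inv_cons
    have hdisj : Disjoint (N.dom ab) (N.dom eb) := by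
      rw [Finset.disjoint_left]
      intro p hpa hpb
      have h1 : c1.2 (.inr p) ≤ eθ :=
        hrest.mono (eb, eθ) List.mem_cons_self p hpb
      have h2 : c1.2 (.inr p) = v1 (.inr p) := lact_inr ha p
      have h3 := hθa p hpa
      have h4 := hmin (ab, aθ) List.mem_cons_self
      rw [h2, h3] at h1
      exact absurd h1 (not_le.mpr h4)
    obtain ⟨v1', ⟨q1', w1'⟩, v2', w', hD1, hB, hrefB, hD2, hA, hrefA, hDw⟩ :=
      swap_steps hdisj hd ha hd2 hbe
    refine LRunT.cons hD1 hB (fun p hp => (hrefB p hp).trans (hθe p hp)) ?_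
    refine LRunT.cons hD2 hA (fun p hp => (hrefA p hp).trans (hθa p hp)) ?_
    obtain ⟨qB, wB⟩ := cB
    exact htail2.prepend hDw

/-- Every nonempty list has a decomposition at its first minimal element. -/
lemma findMin : ∀ (u : List (N.Act × ℝ)), u ≠ [] →
    ∃ u1 e u2, u = u1 ++ e :: u2 ∧ (∀ f ∈ u1, e.2 < f.2) ∧ (∀ f ∈ u2, e.2 ≤ f.2) := by
  intro u
  induction u with
  | nil => simp
  | cons a t ih =>
    intro _
    by_cases ht : t = []
    · subst ht
      exact ⟨[], a, [], by simp, by simp, by simp⟩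
    · obtain ⟨t1, e, t2, rfl, h1, h2⟩ := ih ht
      by_cases hae : e.2 < a.2
      · refine ⟨a :: t1, e, t2, rfl, ?_, h2⟩
        intro f hf
        rcases List.mem_cons.mp hf with rfl | hf
        · exact hae
        · exact h1 f hf
      · push_neg at hae
        refine ⟨[], a, t1 ++ e :: t2, rfl, by simp, ?_⟩
        intro f hf
        rcases List.mem_append.mp hf with hf | hf
        · exact hae.trans (h1 f hf).le
        · rcases List.mem_cons.mp hf with rfl | hf
          · exact hae
          · exact hae.trans (h2 f hf)

/-- Every timed local run can be reordered into one whose action times are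
nondecreasing. -/
lemma sortRun_s6 : ∀ (n : ℕ) (u : List (N.Act × ℝ)) (c c2 : N.State × N.LVal),
    u.length ≤ n → N.LRunT u c c2 →
    ∃ u', List.Pairwise (fun e f : N.Act × ℝ => e.2 ≤ f.2) u' ∧
      (∀ f ∈ u', f ∈ u) ∧ N.LRunT u' c c2 := by
  intro n
  induction n with
  | zero =>
    intro u c c2 hl h
    rw [Nat.le_zero, List.length_eq_zero_iff] at hl
    subst hl
    exact ⟨[], by simp, by simp, h⟩
  | succ n ih =>
    intro u c c2 hl h
    by_cases hu : u = []
    · subst hu; exact ⟨[], by simp, by simp, h⟩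
    · obtain ⟨u1, e, u2, rfl, h1, h2⟩ := findMin u hu
      obtain ⟨q, v⟩ := c
      have h' := moveMin u1 h h1
      obtain ⟨eb, eθ⟩ := e
      obtain ⟨v1, c1, hd, hb, hθ, htail⟩ := h'.inv_cons
      have hlen : (u1 ++ u2).length ≤ n := by
        simp only [List.length_append, List.length_cons] at hl ⊢
        omega
      obtain ⟨u', hpw, hmem, hrun⟩ := ih (u1 ++ u2) c1 c2 hlen htail
      refine ⟨(eb, eθ) :: u', ?_, ?_, LRunT.cons hd hb hθ hrun⟩
      · refine List.Pairwise.cons ?_ hpw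
        intro f hf
        rcases List.mem_append.mp (hmem f hf) with hf' | hf'
        · exact (h1 f hf').le
        · exact h2 f hf'
      · intro f hf
        rcases List.mem_cons.mp hf with rfl | hf
        · exact List.mem_append.mpr (Or.inr List.mem_cons_self)
        · rcases List.mem_append.mp (hmem f hf) with h' | h'
          · exact List.mem_append.mpr (Or.inl h')
          · exact List.mem_append.mpr (Or.inr (List.mem_cons_of_mem _ h'))

/-- A time-sorted local run yields a global run reaching the same state. -/
lemma toGlobalRun {u c c2} (h : N.LRunT u c c2) :
    ∀ w : N.GVal, (∀ x, w (.inl x) = c.2 (.inl x)) → (∀ e ∈ u, w (.inr ()) ≤ e.2) →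
    List.Pairwise (fun e f : N.Act × ℝ => e.2 ≤ f.2) u →
    ∃ u' v2, N.GRun u' (c.1, w) (c2.1, v2) := by
  induction h with
  | @nil q v v' hd =>
    intro w _ _ _
    exact ⟨[], _, GRun.nil 0 le_rfl⟩
  | @cons b θ u q v v1 c1 c2 hd hb hθ h ih =>
    intro w hoff hbd hpw
    have hoffv : ∀ x, w (.inl x) = v (.inl x) := hoff
    have hδ : 0 ≤ θ - w (.inr ()) := sub_nonneg.mpr (hbd (b, θ) List.mem_cons_self)
    set w1 : N.GVal := N.gdelay w (θ - w (.inr ())) with hw1def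
    have hw1t : w1 (.inr ()) = θ := by
      rw [hw1def]; show w (.inr ()) + (θ - w (.inr ())) = θ; ring
    have hw1l : ∀ x, w1 (.inl x) = w (.inl x) := fun x => rfl
    have hb' := hb
    obtain ⟨tr, htr, hout, hsync, hg, hres⟩ := hb'
    set R : Set N.Clock := {x | ∃ p, ∃ (hp : p ∈ N.dom b), x ∈ (tr p hp).2.2.1} with hRdef
    have hRb : ∀ x ∈ R, N.owner x ∈ N.dom b := by
      rintro x ⟨p, hp, hx⟩
      rw [(N.trans_wf b p _ (htr p hp).1).2 x hx]; exact hp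
    set w2 : N.GVal := N.greset R w1 with hw2def
    have hw2t : w2 (.inr ()) = θ := by rw [hw2def]; exact hw1t
    have hw2l_in : ∀ x ∈ R, w2 (.inl x) = θ := fun x hx => by
      rw [hw2def, greset_inl, if_pos hx, hw1t]
    have hw2l_out : ∀ x, x ∉ R → w2 (.inl x) = w (.inl x) := fun x hx => by
      rw [hw2def, greset_inl, if_neg hx, hw1l]
    have hc1r : ∀ p, c1.2 (.inr p) = v1 (.inr p) := fun p => lact_inr hb p
    have hc1l_in : ∀ x ∈ R, c1.2 (.inl x) = v1 (.inr (N.owner x)) := fun x hx => by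
      rw [hres, lreset_inl, if_pos hx]
    have hc1l_out : ∀ x, x ∉ R → c1.2 (.inl x) = v1 (.inl x) := fun x hx => by
      rw [hres, lreset_inl, if_neg hx]
    have hgact : N.gact b (q, w1) (c1.1, w2) := by
      refine ⟨tr, fun p hp => htr p hp, hout, ?_, hw2def⟩
      intro p hp cg hcg
      have hown : N.owner cg.1 = p := (N.trans_wf b p _ (htr p hp).1).1 cg hcg
      have hownb : N.owner cg.1 ∈ N.dom b := hown ▸ hp
      have hsat := hg p hp cg hcg
      show Cmp.sat _ (w1 (.inr ()) - w1 (.inl cg.1)) _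
      rw [hw1t, hw1l, hoffv, ← ldelayed_inl hd cg.1, ← hθ _ hownb]
      exact hsat
    have hoff' : ∀ x, w2 (.inl x) = c1.2 (.inl x) := by
      intro x
      by_cases hx : x ∈ R
      · rw [hw2l_in x hx, hc1l_in x hx, hθ _ (hRb x hx)]
      · rw [hw2l_out x hx, hc1l_out x hx, hoffv, ldelayed_inl hd]
    have hbd' : ∀ e ∈ u, w2 (.inr ()) ≤ e.2 := by
      intro e he
      rw [hw2t]
      exact (List.pairwise_cons.mp hpw).1 e he
    obtain ⟨u', v2g, hg2⟩ := ih w2 hoff' hbd' (List.pairwise_cons.mp hpw).2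
    exact ⟨b :: u', v2g, GRun.cons _ hδ hgact hg2⟩

lemma toLocal_delay (v : N.GVal) (δ : ℝ) (hδ : 0 ≤ δ) :
    N.ldelayed (N.toLocal v) (N.toLocal (N.gdelay v δ)) := by
  refine ⟨fun _ => δ, fun _ => hδ, ?_⟩
  funext y; cases y <;> rfl

lemma gact_toLocal {b : N.Act} {q : N.State} {w : N.GVal} {c1 : N.State × N.GVal}
    (h : N.gact b (q, w) c1) :
    N.lact b (q, N.toLocal w) (c1.1, N.toLocal c1.2) := by
  obtain ⟨tr, htr, hout, hg, hres⟩ := h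
  refine ⟨tr, htr, hout, fun p _ p' _ => rfl, ?_, ?_⟩
  · intro p hp cg hcg
    exact hg p hp cg hcg
  · show N.toLocal c1.2 = N.lreset {x | ∃ p, ∃ (hp : p ∈ N.dom b), x ∈ (tr p hp).2.2.1} (N.toLocal w)
    rw [hres]
    funext y
    cases y with
    | inl x =>
      show N.greset _ w (.inl x) = N.lreset _ (N.toLocal w) (.inl x)
      rw [greset_inl, lreset_inl]
      by_cases hx : x ∈ {x | ∃ p, ∃ (hp : p ∈ N.dom b), x ∈ (tr p hp).2.2.1}
      · rw [if_pos hx, if_pos hx]; rfl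
      · rw [if_neg hx, if_neg hx]; rfl
    | inr p => rfl

lemma GRun.toLocalRun {u : List N.Act} {c c2 : N.State × N.GVal} (h : N.GRun u c c2) :
    N.LRun u (c.1, N.toLocal c.2) (c2.1, N.toLocal c2.2) := by
  induction h with
  | @nil q v δ hδ => exact LRun.nil (toLocal_delay v δ hδ)
  | @cons b u q v c1 c2 δ hδ hb h ih =>
    exact LRun.cons (toLocal_delay v δ hδ) (gact_toLocal hb) ih

end Network

theorem stmt6 (N : Network) (q : N.State) : N.GReach q ↔ N.LReach q := by
  constructor
  · rintro ⟨u, v, h⟩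
    have hrun := h.toLocalRun
    have hinit : N.toLocal N.gvalInit = N.lvalInit := by
      funext y; cases y <;> rfl
    rw [show ((N.initState, N.gvalInit) : N.State × N.GVal).2 = N.gvalInit from rfl,
      hinit] at hrun
    exact ⟨u, _, hrun⟩
  · rintro ⟨u, v, h⟩
    obtain ⟨ut, hne, ht⟩ := h.toT
    obtain ⟨u', hpw, hmem, hrun⟩ := Network.sortRun_s6 ut.length ut _ _ le_rfl ht
    have hbd : ∀ e ∈ u', N.gvalInit (.inr ()) ≤ e.2 := by
      intro e he
      obtain ⟨p, hp⟩ := hne e (hmem e he)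
      exact hrun.mono e he p hp
    obtain ⟨u'', v2, hg⟩ := Network.toGlobalRun hrun N.gvalInit (fun x => rfl) hbd hpw
    exact ⟨u'', v2, hg⟩
end
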